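/- Let a, v ∈ ℝⁿ (n ≥ 2) and assume all components of v are non-zero. Then there exists a unique t ∈ ℝ minimizing the function u ↦ ‖a - u·v‖_∞ over ℝ. -/
import Mathlib


open Filter

/-- A vector is Chebyshev if all of its components are non-zero. -/
def Cheb {n : ℕ} (v : Fin n → ℝ) : Prop := ∀ i, v i ≠ 0

/-- `mu a v` is the (unique, when `v` is Chebyshev) minimizer of `u ↦ ‖a - u • v‖`,
where `‖·‖` is the sup-norm on `Fin n → ℝ`. -/
noncomputable def mu {n : ℕ} (a v : Fin n → ℝ) : ℝ :=
  Classical.epsilon fun t : ℝ => ∀ u : ℝ, ‖a - t • v‖ ≤ ‖a - u • v‖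

noncomputable def phi {m n : ℕ} (A : Fin m → Fin n → ℝ) (v : Fin n → ℝ) : Fin m → ℝ :=
  fun i => mu (A i) v

noncomputable def psi {m n : ℕ} (A : Fin m → Fin n → ℝ) (u : Fin m → ℝ) : Fin n → ℝ :=
  fun j => mu (fun i => A i j) u

/-- `A` preserves Chebyshev systems. -/
def PreservesCheb {m n : ℕ} (A : Fin m → Fin n → ℝ) : Prop :=
  (∀ v : Fin n → ℝ, Cheb v → Cheb (phi A v)) ∧ (∀ u : Fin m → ℝ, Cheb u → Cheb (psi A u))

/-- A vector is alternance-free if exactly one component attains the max absolute value. -/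
def AlternanceFree {n : ℕ} (a : Fin n → ℝ) : Prop := ∃! i, |a i| = ‖a‖

/-- Chebyshev norm of the residual `A - u vᵀ`. -/
noncomputable def Cerr {m n : ℕ} (A : Fin m → Fin n → ℝ) (u : Fin m → ℝ) (v : Fin n → ℝ) : ℝ :=
  ⨆ i, ⨆ j, |A i j - u i * v j|

/-- Chebyshev norm of a matrix. -/
noncomputable def CnormM {m n : ℕ} (A : Fin m → Fin n → ℝ) : ℝ :=
  ⨆ i, ⨆ j, |A i j|

/-- The sequence `v⁽ᵏ⁾` of the alternating minimization method started at `v0`. -/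
noncomputable def vseq {m n : ℕ} (A : Fin m → Fin n → ℝ) (v0 : Fin n → ℝ) : ℕ → Fin n → ℝ
  | 0 => v0
  | k + 1 => psi A (phi A (vseq A v0 k))



lemma midabs {x y m : ℝ} (hx : |x| ≤ m) (hy : |y| ≤ m) (hne : x ≠ y) :
    |(x + y) / 2| < m := by
  rw [abs_le] at hx hy
  rw [abs_lt]
  constructor
  · have h : -(2*m) ≠ x + y := by
      intro h
      have hx' : x = -m := by linarith
      have hy' : y = -m := by linarith
      exact hne (hx'.trans hy'.symm)
    have : -(2*m) < x + y := lt_of_le_of_ne (by linarith) h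
    linarith
  · have h : x + y ≠ 2*m := by
      intro h
      have hx' : x = m := by linarith
      have hy' : y = m := by linarith
      exact hne (hx'.trans hy'.symm)
    have : x + y < 2*m := lt_of_le_of_ne (by linarith) h
    linarith

theorem stmt0 {n : ℕ} (hn : 2 ≤ n) (a v : Fin n → ℝ) (hv : Cheb v) :
    ∃! t : ℝ, ∀ u : ℝ, ‖a - t • v‖ ≤ ‖a - u • v‖ := by
  have hn0 : 0 < n := by omega
  have i0 : Fin n := ⟨0, hn0⟩
  have hvi0 : 0 < |v i0| := abs_pos.mpr (hv i0)
  have hcomp : ∀ (u : ℝ) (i : Fin n), (a - u • v) i = a i - u * v i := by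
    intro u i; simp [Pi.sub_apply]
  have hlb : ∀ (u : ℝ) (i : Fin n), |a i - u * v i| ≤ ‖a - u • v‖ := by
    intro u i
    have := norm_le_pi_norm (a - u • v) i
    rwa [hcomp, Real.norm_eq_abs] at this
  set R : ℝ := (‖a‖ + |a i0| + 1) / |v i0| with hR
  have hR0 : 0 ≤ R := by positivity
  obtain ⟨t, htmem, htmin⟩ := (isCompact_Icc (a := -R) (b := R)).exists_isMinOn
    ⟨0, by constructor <;> linarith⟩
    (Continuous.continuousOn (by fun_prop : Continuous fun u : ℝ => ‖a - u • v‖))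
  have hglobal : ∀ u : ℝ, ‖a - t • v‖ ≤ ‖a - u • v‖ := by
    intro u
    by_cases hu : u ∈ Set.Icc (-R) R
    · exact htmin hu
    · have h0 : ‖a - t • v‖ ≤ ‖a - (0:ℝ) • v‖ := htmin ⟨by linarith, by linarith⟩
      have h0' : ‖a - (0:ℝ) • v‖ = ‖a‖ := by simp
      have hu' : R < |u| := by
        simp only [Set.mem_Icc, not_and_or, not_le] at hu
        rcases hu with h | h
        · calc R < -u := by linarith
            _ ≤ |u| := neg_le_abs u
        · exact lt_of_lt_of_le h (le_abs_self u)
      have h2 : ‖a‖ + |a i0| + 1 < |u| * |v i0| := by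
        rw [hR, div_lt_iff₀ hvi0] at hu'
        linarith
      have h1 : |u * v i0| - |a i0| ≤ |a i0 - u * v i0| := by
        have := abs_sub_abs_le_abs_sub (u * v i0) (a i0)
        rw [abs_sub_comm] at this
        linarith
      have h3 := hlb u i0
      rw [abs_mul] at h1
      linarith [h0, h0'.le]
  refine ⟨t, hglobal, ?_⟩
  intro t' ht'
  by_contra hne
  set m : ℝ := ‖a - t • v‖ with hm
  have heq : ‖a - t' • v‖ = m := le_antisymm (ht' t) (hglobal t')
  have hm0 : 0 < m := by
    rcases (norm_nonneg (a - t • v)).lt_or_eq with h | h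
    · exact h
    · exfalso
      have ha : a - t • v = 0 := norm_eq_zero.mp (hm.trans h.symm)
      have ha' : a - t' • v = 0 := norm_eq_zero.mp (heq.trans (hm.trans h.symm))
      have hxi := congrFun ha i0
      have hyi := congrFun ha' i0
      rw [hcomp] at hxi hyi
      simp only [Pi.zero_apply] at hxi hyi
      have : (t' - t) * v i0 = 0 := by ring_nf; linarith [hxi, hyi]
      rcases mul_eq_zero.mp this with h' | h'
      · exact hne (by linarith)
      · exact hv i0 h'
  set w : ℝ := (t' + t) / 2 with hw
  have hwlt : ‖a - w • v‖ < m := by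
    rw [pi_norm_lt_iff hm0]
    intro i
    rw [hcomp, Real.norm_eq_abs]
    have hx := (hlb t' i).trans_eq heq
    have hy := hlb t i
    rw [← hm] at hy
    have hxy : a i - t' * v i ≠ a i - t * v i := by
      intro h
      apply hne
      have : (t' - t) * v i = 0 := by nlinarith [h]
      rcases mul_eq_zero.mp this with h' | h'
      · linarith
      · exact absurd h' (hv i)
    have := midabs hx hy hxy
    have harith : (a i - t' * v i + (a i - t * v i)) / 2 = a i - w * v i := by
      rw [hw]; ring
    rwa [harith] at this
  exact absurd (hglobal w) (not_le.mpr hwlt)
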